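/- Let Γ be a uniform ranked poset, R = R(Γ) and x ∈ Γ′. Then the right annihilator of r_x in R is rann_R(r_x) = r_x(1)R ⊕ H_x(1), and this sum is direct. (This formula holds unconditionally, whether or not R(Γ) is Koszul.) -/

import Mathlib

set_option linter.unusedSectionVars false
set_option linter.unusedVariables false

open scoped Classical

variable {Γ : Type*} [PartialOrder Γ] [OrderBot Γ] [Fintype Γ]

/-- `rk` is a rank function for the finite poset `Γ` (with least element `⊥`):
the bottom has rank `0` and ranks increase by one along covering relations.
Equivalently, all maximal chains in `[⊥, x]` have the same length `rk x`. -/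
def IsRanked (rk : Γ → ℕ) : Prop :=
  rk ⊥ = 0 ∧ ∀ a b : Γ, a ⋖ b → rk b = rk a + 1

/-- `rankSet rk x n` is the set `S_x(n) = {y ≤ x : rk x - rk y = n}`. -/
def rankSet (rk : Γ → ℕ) (x : Γ) (n : ℕ) : Set Γ := {y | y ≤ x ∧ rk y + n = rk x}

/-- `Γ` is uniform: for each `a`, the equivalence relation on `S_a(1)` generated by
`b ∼ c` whenever `S_b(1) ∩ S_c(1) ≠ ∅` has at most one equivalence class. -/
def Uniform (rk : Γ → ℕ) : Prop :=
  ∀ a b c : Γ, b ∈ rankSet rk a 1 → c ∈ rankSet rk a 1 →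
    Relation.EqvGen
      (fun u v => u ∈ rankSet rk a 1 ∧ v ∈ rankSet rk a 1 ∧
        (rankSet rk u 1 ∩ rankSet rk v 1).Nonempty)
      b c

/-- `Γ' = Γ \ {⊥}`, indexing the generators `r_x`. -/
abbrev Vert (Γ : Type*) [PartialOrder Γ] [OrderBot Γ] := {x : Γ // x ≠ (⊥ : Γ)}

variable (F : Type*) [Field F]

/-- The generator `r_x` of the tensor algebra `T(W)` on the vector space `W` with
basis `{r_x : x ∈ Γ'}`, realized as the free algebra on `Γ'`. -/
noncomputable def gen (x : Vert Γ) : FreeAlgebra F (Vert Γ) := FreeAlgebra.ι F x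

/-- `r_x(n) = Σ_{y ∈ S_x(n)} r_y ∈ W` (which is `0` for `n ≥ rk x`). -/
noncomputable def rxn (rk : Γ → ℕ) (x : Γ) (n : ℕ) : FreeAlgebra F (Vert Γ) :=
  ∑ y ∈ Finset.univ.filter (fun y : Vert Γ => y.1 ∈ rankSet rk x n), gen F y

/-- The quadratic relations spanning `I_2`: `r_x ⊗ r_y` for `y ∉ S_x(1)`, and
`r_x ⊗ r_x(1)`, for `x, y ∈ Γ'`. -/
inductive GRel (F : Type*) [Field F] {Γ : Type*} [PartialOrder Γ] [OrderBot Γ]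
    [Fintype Γ] (rk : Γ → ℕ) :
    FreeAlgebra F (Vert Γ) → FreeAlgebra F (Vert Γ) → Prop
  | mono (x y : Vert Γ) (h : y.1 ∉ rankSet rk x.1 1) : GRel F rk (gen F x * gen F y) 0
  | adj (x : Vert Γ) : GRel F rk (gen F x * rxn F rk x.1 1) 0

/-- The quadratic algebra `R(Γ) = T(W)/I`, where `I` is the two-sided ideal
generated by `I_2`. -/
abbrev RGamma (rk : Γ → ℕ) := RingQuot (GRel F rk)

/-- The image of `r_x` in `R(Γ)`. -/
noncomputable def rbar (rk : Γ → ℕ) (x : Vert Γ) : RGamma F rk :=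
  RingQuot.mkAlgHom F (GRel F rk) (gen F x)

/-- The image of `r_x(n)` in `R(Γ)`. -/
noncomputable def rxnbar (rk : Γ → ℕ) (x : Γ) (n : ℕ) : RGamma F rk :=
  RingQuot.mkAlgHom F (GRel F rk) (rxn F rk x n)

/-- The right ideal `r_x R = {r_x · s : s ∈ R}`, as an `F`-submodule of `R(Γ)`. -/
noncomputable def rIdeal (rk : Γ → ℕ) (x : Vert Γ) : Submodule F (RGamma F rk) :=
  LinearMap.range (LinearMap.mulLeft F (rbar F rk x))

/-- `H_x(n) = Σ_{y ∈ Γ', y ∉ S_x(n)} r_y R`. -/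
noncomputable def Hsub (rk : Γ → ℕ) (x : Γ) (n : ℕ) : Submodule F (RGamma F rk) :=
  ⨆ (y : Vert Γ) (_ : y.1 ∉ rankSet rk x n), rIdeal F rk y

namespace RannAux

variable {X : Type*} [DecidableEq X] {K : Type*} [Field K]

noncomputable def bs : Module.Basis (FreeMonoid X) K (FreeAlgebra K X) :=
  FreeAlgebra.basisFreeMonoid K X

lemma bs_apply (w : FreeMonoid X) :
    (bs w : FreeAlgebra K X) =
      (FreeAlgebra.equivMonoidAlgebraFreeMonoid (R := K) (X := X)).symm
        (MonoidAlgebra.single w 1) := by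
  simp [bs, FreeAlgebra.basisFreeMonoid, Module.Basis.map_apply]

lemma bs_one : (bs 1 : FreeAlgebra K X) = 1 := by
  rw [bs_apply]
  have : (MonoidAlgebra.single (1 : FreeMonoid X) (1 : K)) = (1 : MonoidAlgebra K (FreeMonoid X)) := rfl
  rw [this, map_one]

lemma bs_mul (w w' : FreeMonoid X) :
    (bs (w * w') : FreeAlgebra K X) = bs w * bs w' := by
  rw [bs_apply, bs_apply, bs_apply, ← map_mul]
  congr 1
  rw [MonoidAlgebra.single_mul_single, one_mul]

lemma bs_of (v : X) : (bs (FreeMonoid.of v) : FreeAlgebra K X) = FreeAlgebra.ι K v := by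
  rw [bs_apply]
  have h : (FreeAlgebra.equivMonoidAlgebraFreeMonoid (R := K) (X := X)) (FreeAlgebra.ι K v)
      = MonoidAlgebra.single (FreeMonoid.of v) 1 := by
    simp [FreeAlgebra.equivMonoidAlgebraFreeMonoid]
  rw [← h, AlgEquiv.symm_apply_apply]

lemma freeMonoid_eq_one_iff (w : FreeMonoid X) : w = 1 ↔ FreeMonoid.toList w = [] :=
  ⟨fun h => by rw [h]; rfl, fun h => by rw [← FreeMonoid.ofList_toList w, h]; rfl⟩

lemma freeMonoid_mul_eq_one {w w' : FreeMonoid X} : w * w' = 1 ↔ w = 1 ∧ w' = 1 := by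
  simp [freeMonoid_eq_one_iff, FreeMonoid.toList_mul]

lemma of_mul_ne_one (h : X) (t : FreeMonoid X) : FreeMonoid.of h * t ≠ 1 := fun hh => by
  have h2 := (freeMonoid_eq_one_iff _).mp hh
  rw [FreeMonoid.toList_of_mul] at h2
  simp at h2

/-- auxiliary: value of `pz z` on a basis word, by cases on the word. -/
noncomputable def fzList (z : X) : List X → FreeAlgebra K X
  | [] => 0
  | h :: t => if h = z then bs (FreeMonoid.ofList t) else 0

noncomputable def fz (z : X) (w : FreeMonoid X) : FreeAlgebra K X :=
  fzList z (FreeMonoid.toList w)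

lemma fz_one (z : X) : (fz z 1 : FreeAlgebra K X) = 0 := rfl

lemma fz_of_mul (z h : X) (w : FreeMonoid X) :
    (fz z (FreeMonoid.of h * w) : FreeAlgebra K X) = if h = z then bs w else 0 := by
  show fzList z (FreeMonoid.toList (FreeMonoid.of h * w)) = _
  rw [FreeMonoid.toList_of_mul]
  show (if h = z then (bs (FreeMonoid.ofList (FreeMonoid.toList w)) : FreeAlgebra K X) else 0) = _
  rw [FreeMonoid.ofList_toList]

/-- "left component at `z`" linear map. -/
noncomputable def pz (z : X) : FreeAlgebra K X →ₗ[K] FreeAlgebra K X :=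
  (bs (K := K) (X := X)).constr K (fz z)

/-- "constant coefficient" linear map. -/
noncomputable def pe : FreeAlgebra K X →ₗ[K] K :=
  (bs (K := K) (X := X)).constr K (fun w => if w = 1 then 1 else 0)

lemma pz_bs (z : X) (w : FreeMonoid X) : pz z (bs w : FreeAlgebra K X) = fz z w :=
  Module.Basis.constr_basis _ _ _ _

lemma pe_bs (w : FreeMonoid X) : pe (bs w : FreeAlgebra K X) = if w = 1 then 1 else 0 :=
  Module.Basis.constr_basis _ _ _ _

lemma pz_mul (z : X) (a b : FreeAlgebra K X) :
    pz z (a * b) = pz z a * b + pe a • pz z b := by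
  have h : (LinearMap.mul K (FreeAlgebra K X)).compr₂ (pz z)
      = (LinearMap.mul K (FreeAlgebra K X)).compl₁₂ (pz z) LinearMap.id
        + (LinearMap.lsmul K (FreeAlgebra K X)).compl₁₂ pe (pz z) := by
    refine (bs (K := K) (X := X)).ext fun w => (bs (K := K) (X := X)).ext fun w' => ?_
    simp only [LinearMap.compr₂_apply, LinearMap.mul_apply', LinearMap.add_apply,
      LinearMap.compl₁₂_apply, LinearMap.id_coe, id_eq, LinearMap.lsmul_apply]
    rw [← bs_mul, pz_bs, pz_bs, pz_bs, pe_bs]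
    induction w using FreeMonoid.recOn with
    | one => simp [fz_one]
    | of_mul h t _ =>
      rw [mul_assoc, fz_of_mul, fz_of_mul, if_neg (of_mul_ne_one h t), zero_smul, add_zero]
      split_ifs with hz
      · rw [bs_mul]
      · rw [zero_mul]
  have := DFunLike.congr_fun (DFunLike.congr_fun h a) b
  simpa using this

lemma pe_mul (a b : FreeAlgebra K X) : pe (a * b) = pe a * pe b := by
  have h : (LinearMap.mul K (FreeAlgebra K X)).compr₂ pe
      = (LinearMap.mul K K).compl₁₂ pe pe := by
    refine (bs (K := K) (X := X)).ext fun w => (bs (K := K) (X := X)).ext fun w' => ?_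
    simp only [LinearMap.compr₂_apply, LinearMap.mul_apply', LinearMap.compl₁₂_apply]
    rw [← bs_mul, pe_bs, pe_bs, pe_bs]
    by_cases h1 : w = 1 <;> by_cases h2 : w' = 1 <;>
      simp [h1, h2, freeMonoid_mul_eq_one]
  have := DFunLike.congr_fun (DFunLike.congr_fun h a) b
  simpa using this

lemma pz_iota_mul (z y : X) (a : FreeAlgebra K X) :
    pz z (FreeAlgebra.ι K y * a) = if y = z then a else 0 := by
  rw [pz_mul]
  have h1 : pz z (FreeAlgebra.ι K y) = if y = z then (1 : FreeAlgebra K X) else 0 := by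
    rw [← bs_of, pz_bs]
    have : FreeMonoid.of y = FreeMonoid.of y * 1 := (mul_one _).symm
    rw [this, fz_of_mul]
    split_ifs <;> simp [bs_one]
  have h2 : pe (FreeAlgebra.ι K y : FreeAlgebra K X) = 0 := by
    rw [← bs_of, pe_bs, if_neg]
    intro h
    exact of_mul_ne_one y 1 (by simpa using h)
  rw [h1, h2, zero_smul, add_zero]
  split_ifs <;> simp

end RannAux

namespace RW

open RannAux

/-- The span of `{a (p - q) b}` over the defining relations: the two-sided ideal `I`. -/
noncomputable def Isub (rk : Γ → ℕ) : Submodule F (FreeAlgebra F (Vert Γ)) :=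
  Submodule.span F {c | ∃ a b p q, GRel F rk p q ∧ c = a * (p - q) * b}

lemma mem_Isub_gen (rk : Γ → ℕ) (a b p q : FreeAlgebra F (Vert Γ)) (h : GRel F rk p q) :
    a * (p - q) * b ∈ Isub F rk :=
  Submodule.subset_span ⟨a, b, p, q, h, rfl⟩

lemma Isub_mul (rk : Γ → ℕ) {d : FreeAlgebra F (Vert Γ)} (hd : d ∈ Isub F rk)
    (c : FreeAlgebra F (Vert Γ)) : d * c ∈ Isub F rk := by
  induction hd using Submodule.span_induction with
  | mem u hu =>
    obtain ⟨a, b, p, q, hpq, rfl⟩ := hu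
    rw [mul_assoc]
    exact mem_Isub_gen F rk a (b * c) p q hpq
  | zero => rw [zero_mul]; exact zero_mem _
  | add u v hu hv ihu ihv => rw [add_mul]; exact add_mem ihu ihv
  | smul r u hu ihu => rw [smul_mul_assoc]; exact Submodule.smul_mem _ _ ihu

lemma mul_Isub (rk : Γ → ℕ) {d : FreeAlgebra F (Vert Γ)} (hd : d ∈ Isub F rk)
    (c : FreeAlgebra F (Vert Γ)) : c * d ∈ Isub F rk := by
  induction hd using Submodule.span_induction with
  | mem u hu =>
    obtain ⟨a, b, p, q, hpq, rfl⟩ := hu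
    have h : c * (a * (p - q) * b) = (c * a) * (p - q) * b := by
      rw [← mul_assoc, ← mul_assoc]
    rw [h]
    exact mem_Isub_gen F rk (c * a) b p q hpq
  | zero => rw [mul_zero]; exact zero_mem _
  | add u v hu hv ihu ihv => rw [mul_add]; exact add_mem ihu ihv
  | smul r u hu ihu => rw [mul_smul_comm]; exact Submodule.smul_mem _ _ ihu

lemma mk_apply (rk : Γ → ℕ) (a : FreeAlgebra F (Vert Γ)) :
    RingQuot.mkAlgHom F (GRel F rk) a = ⟨Quot.mk _ a⟩ := by
  have h := DFunLike.congr_fun (RingQuot.mkAlgHom_coe F (GRel F rk)) a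
  rw [RingQuot.mkRingHom_def] at h
  exact h

lemma mk_Isub_eq_zero (rk : Γ → ℕ) {d : FreeAlgebra F (Vert Γ)} (hd : d ∈ Isub F rk) :
    RingQuot.mkAlgHom F (GRel F rk) d = 0 := by
  induction hd using Submodule.span_induction with
  | mem u hu =>
    obtain ⟨a, b, p, q, hpq, rfl⟩ := hu
    rw [map_mul, map_mul, map_sub, RingQuot.mkAlgHom_rel F hpq, sub_self, mul_zero, zero_mul]
  | zero => exact map_zero _
  | add u v hu hv ihu ihv => rw [map_add, ihu, ihv, add_zero]
  | smul r u hu ihu => rw [map_smul, ihu, smul_zero]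

lemma rel_sub_mem (rk : Γ → ℕ) {a b : FreeAlgebra F (Vert Γ)}
    (h : RingQuot.Rel (GRel F rk) a b) : a - b ∈ Isub F rk := by
  induction h with
  | of hpq => simpa using mem_Isub_gen F rk 1 1 _ _ hpq
  | add_left h ih => simpa using ih
  | mul_left h ih => rw [← sub_mul]; exact Isub_mul F rk ih _
  | mul_right h ih => rw [← mul_sub]; exact mul_Isub F rk ih _

lemma eqv_sub_mem (rk : Γ → ℕ) {a b : FreeAlgebra F (Vert Γ)}
    (h : Relation.EqvGen (RingQuot.Rel (GRel F rk)) a b) : a - b ∈ Isub F rk := by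
  induction h with
  | rel u v huv => exact rel_sub_mem F rk huv
  | refl u => simpa using zero_mem (Isub F rk)
  | symm u v h ih => rw [← neg_sub]; exact neg_mem ih
  | trans u v w h1 h2 ih1 ih2 => rw [← sub_add_sub_cancel u v w]; exact add_mem ih1 ih2

lemma mk_sub_mem (rk : Γ → ℕ) (a b : FreeAlgebra F (Vert Γ))
    (h : RingQuot.mkAlgHom F (GRel F rk) a = RingQuot.mkAlgHom F (GRel F rk) b) :
    a - b ∈ Isub F rk := by
  rw [mk_apply, mk_apply] at h
  have h' : Quot.mk (RingQuot.Rel (GRel F rk)) a = Quot.mk _ b := congrArg RingQuot.toQuot h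
  exact eqv_sub_mem F rk (Quot.eqvGen_exact h')

/-- `K_x ⋅ T(W)` : the right ideal of the free algebra generated by
`r_x(1)` and the `r_y`, `y ∉ S_x(1)`. -/
noncomputable def KA (rk : Γ → ℕ) (z : Vert Γ) : Submodule F (FreeAlgebra F (Vert Γ)) :=
  LinearMap.range (LinearMap.mulLeft F (rxn F rk z.1 1)) ⊔
    ⨆ (y : Vert Γ) (_ : y.1 ∉ rankSet rk z.1 1), LinearMap.range (LinearMap.mulLeft F (gen F y))

lemma pz_gen_mul (z y : Vert Γ) (a : FreeAlgebra F (Vert Γ)) :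
    RannAux.pz z (gen F y * a) = if y = z then a else 0 := by
  rw [gen]; exact RannAux.pz_iota_mul z y a

lemma pz_rxn_mul (rk : Γ → ℕ) (z : Vert Γ) (x : Γ) (a : FreeAlgebra F (Vert Γ)) :
    RannAux.pz z (rxn F rk x 1 * a) = if z.1 ∈ rankSet rk x 1 then a else 0 := by
  rw [rxn, Finset.sum_mul, map_sum]
  simp only [pz_gen_mul]
  rw [Finset.sum_ite_eq' _ z (fun _ => a)]
  simp

lemma L1 (rk : Γ → ℕ) {c : FreeAlgebra F (Vert Γ)} (hc : c ∈ Isub F rk) (z : Vert Γ) :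
    RannAux.pz z c ∈ KA F rk z ⊔ Isub F rk := by
  induction hc using Submodule.span_induction with
  | mem d hd =>
    obtain ⟨a, b, p, q, hpq, rfl⟩ := hd
    rw [mul_assoc, RannAux.pz_mul]
    have h1 : RannAux.pz z a * ((p - q) * b) ∈ Isub F rk := by
      rw [← mul_assoc]; exact mem_Isub_gen F rk _ b p q hpq
    refine add_mem (Submodule.mem_sup_right h1) (Submodule.smul_mem _ _ ?_)
    cases hpq with
    | mono u v huv =>
      rw [sub_zero, mul_assoc, pz_gen_mul]
      split_ifs with h
      · subst h
        refine Submodule.mem_sup_left (Submodule.mem_sup_right ?_)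
        exact Submodule.mem_iSup_of_mem v (Submodule.mem_iSup_of_mem huv ⟨b, by simp⟩)
      · exact zero_mem _
    | adj u =>
      rw [sub_zero, mul_assoc, pz_gen_mul]
      split_ifs with h
      · subst h
        exact Submodule.mem_sup_left (Submodule.mem_sup_left ⟨b, by simp⟩)
      · exact zero_mem _
  | zero => rw [map_zero]; exact zero_mem _
  | add u v hu hv ihu ihv => rw [map_add]; exact add_mem ihu ihv
  | smul r u hu ihu => rw [map_smul]; exact Submodule.smul_mem _ _ ihu

lemma crux1 (rk : Γ → ℕ) (x : Vert Γ) {s : FreeAlgebra F (Vert Γ)}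
    (h : gen F x * s ∈ Isub F rk) : s ∈ KA F rk x ⊔ Isub F rk := by
  have h2 := L1 F rk h x
  rwa [pz_gen_mul, if_pos rfl] at h2

lemma gen_mul_KA (rk : Γ → ℕ) (v : Vert Γ) {s : FreeAlgebra F (Vert Γ)}
    (hs : s ∈ KA F rk v ⊔ Isub F rk) : gen F v * s ∈ Isub F rk := by
  obtain ⟨k, hk, i, hi, rfl⟩ := Submodule.mem_sup.mp hs
  rw [mul_add]
  refine add_mem ?_ (mul_Isub F rk hi (gen F v))
  obtain ⟨k1, hk1, k2, hk2, rfl⟩ := Submodule.mem_sup.mp hk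
  rw [mul_add]
  refine add_mem ?_ ?_
  · obtain ⟨u, rfl⟩ := hk1
    have h : gen F v * (LinearMap.mulLeft F (rxn F rk v.1 1) u)
        = 1 * (gen F v * rxn F rk v.1 1 - 0) * u := by
      simp [LinearMap.mulLeft_apply, mul_assoc]
    rw [h]
    exact mem_Isub_gen F rk 1 u _ 0 (GRel.adj v)
  · have hle : (⨆ (y : Vert Γ) (_ : y.1 ∉ rankSet rk v.1 1),
        LinearMap.range (LinearMap.mulLeft F (gen F y)))
        ≤ Submodule.comap (LinearMap.mulLeft F (gen F v)) (Isub F rk) := by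
      refine iSup_le fun y => iSup_le fun hy => ?_
      rintro t ⟨u, rfl⟩
      simp only [Submodule.mem_comap, LinearMap.mulLeft_apply]
      have h : gen F v * (gen F y * u) = 1 * (gen F v * gen F y - 0) * u := by
        simp [mul_assoc]
      rw [h]
      exact mem_Isub_gen F rk 1 u _ 0 (GRel.mono v y hy)
    have h2 := hle hk2
    simpa using h2

end RW

/-- Remark 3.5.  Let `Γ` be a uniform ranked poset, `R = R(Γ)`
and `x ∈ Γ'`.  Then the right annihilator of `r_x` in `R` is
`rann_R(r_x) = r_x(1)R ⊕ H_x(1)`, and this sum is direct.  (This holds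
unconditionally, whether or not `R(Γ)` is Koszul.) -/
theorem rann_rx (rk : Γ → ℕ) (hrk : IsRanked rk) (hU : Uniform rk) (x : Vert Γ) :
    LinearMap.ker (LinearMap.mulLeft F (rbar F rk x)) =
      LinearMap.range (LinearMap.mulLeft F (rxnbar F rk x.1 1)) ⊔ Hsub F rk x.1 1 ∧
    LinearMap.range (LinearMap.mulLeft F (rxnbar F rk x.1 1)) ⊓ Hsub F rk x.1 1 = ⊥ := by
  classical
  have hadj : rbar F rk x * rxnbar F rk x.1 1 = 0 := by
    rw [rbar, rxnbar, ← map_mul, RingQuot.mkAlgHom_rel F (GRel.adj x), map_zero]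
  have hmono : ∀ y : Vert Γ, y.1 ∉ rankSet rk x.1 1 → rbar F rk x * rbar F rk y = 0 := by
    intro y hy
    rw [rbar, rbar, ← map_mul, RingQuot.mkAlgHom_rel F (GRel.mono x y hy), map_zero]
  constructor
  · apply le_antisymm
    · intro ξ hξ
      rw [LinearMap.mem_ker, LinearMap.mulLeft_apply] at hξ
      obtain ⟨s, rfl⟩ := RingQuot.mkAlgHom_surjective F (GRel F rk) ξ
      have h0 : gen F x * s ∈ RW.Isub F rk := by
        have h1 : RingQuot.mkAlgHom F (GRel F rk) (gen F x * s)
            = RingQuot.mkAlgHom F (GRel F rk) 0 := by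
          rw [map_mul, map_zero, ← rbar]
          exact hξ
        simpa using RW.mk_sub_mem F rk _ 0 h1
      have hs := RW.crux1 F rk x h0
      obtain ⟨k, hk, i, hi, rfl⟩ := Submodule.mem_sup.mp hs
      rw [map_add, RW.mk_Isub_eq_zero F rk hi, add_zero]
      obtain ⟨k1, hk1, k2, hk2, rfl⟩ := Submodule.mem_sup.mp hk
      rw [map_add]
      refine add_mem (Submodule.mem_sup_left ?_) (Submodule.mem_sup_right ?_)
      · obtain ⟨u, rfl⟩ := hk1
        refine ⟨RingQuot.mkAlgHom F (GRel F rk) u, ?_⟩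
        simp [LinearMap.mulLeft_apply, rxnbar, ← map_mul]
      · have hle : (⨆ (y : Vert Γ) (_ : y.1 ∉ rankSet rk x.1 1),
            LinearMap.range (LinearMap.mulLeft F (gen F y)))
            ≤ Submodule.comap (RingQuot.mkAlgHom F (GRel F rk)).toLinearMap
              (Hsub F rk x.1 1) := by
          refine iSup_le fun y => iSup_le fun hy => ?_
          rintro t ⟨u, rfl⟩
          simp only [Submodule.mem_comap, AlgHom.toLinearMap_apply, LinearMap.mulLeft_apply,
            map_mul]
          refine Submodule.mem_iSup_of_mem y (Submodule.mem_iSup_of_mem hy ?_)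
          refine ⟨RingQuot.mkAlgHom F (GRel F rk) u, ?_⟩
          simp [LinearMap.mulLeft_apply, rbar, ← map_mul]
        exact hle hk2
    · refine sup_le ?_ ?_
      · rintro ξ ⟨u, rfl⟩
        rw [LinearMap.mem_ker, LinearMap.mulLeft_apply, LinearMap.mulLeft_apply, ← mul_assoc,
          hadj, zero_mul]
      · refine iSup_le fun y => iSup_le fun hy => ?_
        rintro ξ ⟨u, rfl⟩
        rw [LinearMap.mem_ker, LinearMap.mulLeft_apply, LinearMap.mulLeft_apply, ← mul_assoc,
          hmono y hy, zero_mul]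
  · rw [eq_bot_iff]
    intro ξ hξ
    rw [Submodule.mem_inf] at hξ
    obtain ⟨h1, hH⟩ := hξ
    obtain ⟨sb, rfl⟩ := h1
    obtain ⟨s, rfl⟩ := RingQuot.mkAlgHom_surjective F (GRel F rk) sb
    have hle : Hsub F rk x.1 1 ≤ Submodule.map (RingQuot.mkAlgHom F (GRel F rk)).toLinearMap
        (⨆ (y : Vert Γ) (_ : y.1 ∉ rankSet rk x.1 1),
          LinearMap.range (LinearMap.mulLeft F (gen F y))) := by
      refine iSup_le fun y => iSup_le fun hy => ?_
      rintro η ⟨u, rfl⟩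
      obtain ⟨a, rfl⟩ := RingQuot.mkAlgHom_surjective F (GRel F rk) u
      refine ⟨gen F y * a, ?_, ?_⟩
      · refine Submodule.mem_iSup_of_mem y (Submodule.mem_iSup_of_mem hy ?_)
        exact ⟨a, by simp [LinearMap.mulLeft_apply]⟩
      · simp [LinearMap.mulLeft_apply, rbar, ← map_mul]
    obtain ⟨t, htmem, htk⟩ := hle hH
    have htk' : RingQuot.mkAlgHom F (GRel F rk) t
        = rxnbar F rk x.1 1 * RingQuot.mkAlgHom F (GRel F rk) s := by
      simpa [LinearMap.mulLeft_apply] using htk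
    have hdiff : rxn F rk x.1 1 * s - t ∈ RW.Isub F rk := by
      apply RW.mk_sub_mem
      rw [map_mul, htk', rxnbar]
    simp only [Submodule.mem_bot, LinearMap.mulLeft_apply]
    have key : ∀ v ∈ Finset.univ.filter (fun y : Vert Γ => y.1 ∈ rankSet rk x.1 1),
        RingQuot.mkAlgHom F (GRel F rk) (gen F v * s) = 0 := by
      intro v hv
      have hv1 : v.1 ∈ rankSet rk x.1 1 := (Finset.mem_filter.mp hv).2
      apply RW.mk_Isub_eq_zero
      apply RW.gen_mul_KA
      have h2 := RW.L1 F rk hdiff v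
      rw [map_sub, RW.pz_rxn_mul, if_pos hv1] at h2
      have hzt : RannAux.pz v t = 0 := by
        have hle2 : (⨆ (y : Vert Γ) (_ : y.1 ∉ rankSet rk x.1 1),
            LinearMap.range (LinearMap.mulLeft F (gen F y)))
            ≤ LinearMap.ker (RannAux.pz (K := F) v) := by
          refine iSup_le fun y => iSup_le fun hy => ?_
          rintro t' ⟨u, rfl⟩
          rw [LinearMap.mem_ker, LinearMap.mulLeft_apply, RW.pz_gen_mul, if_neg]
          intro h
          exact hy (by rw [h]; exact hv1)
        exact hle2 htmem
      rwa [hzt, sub_zero] at h2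
    calc rxnbar F rk x.1 1 * RingQuot.mkAlgHom F (GRel F rk) s
        = RingQuot.mkAlgHom F (GRel F rk) (rxn F rk x.1 1 * s) := by
          rw [map_mul, rxnbar]
      _ = ∑ v ∈ Finset.univ.filter (fun y : Vert Γ => y.1 ∈ rankSet rk x.1 1),
            RingQuot.mkAlgHom F (GRel F rk) (gen F v * s) := by
          rw [rxn, Finset.sum_mul, map_sum]
      _ = 0 := Finset.sum_eq_zero key
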